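/- Let q ∈ (0,1), r > 0, s > 0 and p ∈ (0,1]. Then the expression A₁(p) = [(-s·(q+r)·(1-p·q) - q)/(1-p·q)²]·exp(-s·p·(q+r)) + [(s·r·(1-p·q) + q)/(1-p·q)²]·exp(-s·(1 + p·r)) is strictly negative. -/

import Mathlib

open Real

theorem ase_integrand_deriv_neg
    (p q r s : ℝ) (hp : p ∈ Set.Ioc (0:ℝ) 1) (hq : q ∈ Set.Ioo (0:ℝ) 1)
    (hr : 0 < r) (hs : 0 < s) :
    ((-s * (q + r) * (1 - p * q) - q) / (1 - p * q) ^ 2) * Real.exp (-s * p * (q + r)) +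
      ((s * r * (1 - p * q) + q) / (1 - p * q) ^ 2) * Real.exp (-s * (1 + p * r)) < 0 := by
  obtain ⟨hp0, hp1⟩ := hp
  obtain ⟨hq0, hq1⟩ := hq
  have hpq : p * q < 1 := by nlinarith
  have hD : 0 < 1 - p * q := by linarith
  have hE1 : 0 < Real.exp (-s * p * (q + r)) := Real.exp_pos _
  have hE2le : Real.exp (-s * (1 + p * r)) ≤ Real.exp (-s * p * (q + r)) := by
    apply Real.exp_le_exp.2; nlinarith
  have hcoef : 0 ≤ s * r * (1 - p * q) + q := by nlinarith [mul_pos hs hr]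
  have key : (-s * (q + r) * (1 - p * q) - q) * Real.exp (-s * p * (q + r)) +
      (s * r * (1 - p * q) + q) * Real.exp (-s * (1 + p * r)) < 0 := by
    have h1 : (s * r * (1 - p * q) + q) * Real.exp (-s * (1 + p * r)) ≤
        (s * r * (1 - p * q) + q) * Real.exp (-s * p * (q + r)) :=
      mul_le_mul_of_nonneg_left hE2le hcoef
    nlinarith [mul_pos (mul_pos (mul_pos hs hq0) hD) hE1]
  rw [div_mul_eq_mul_div, div_mul_eq_mul_div, ← add_div]
  exact div_neg_of_neg_of_pos key (by positivity)
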